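/- Let (C'•, d'), (C''•, d'') be finite-dimensional Hilbert cochain complexes with Laplacians Δ', Δ'', and let (C•, d) be their tensor product complex with Laplacians Δ_k = ⊕_{i+j=k} (Δ'_i ⊗ I + I ⊗ Δ''_j). Then for all t > 0: Σ_k (−1)^k k Tr(exp(−t Δ_k)) = (Σ_i (−1)^i Tr(exp(−t Δ'_i))) · (Σ_j (−1)^j j Tr(exp(−t Δ''_j))) + (Σ_j (−1)^j Tr(exp(−t Δ''_j))) · (Σ_i (−1)^i i Tr(exp(−t Δ'_i))). -/

import Mathlib

open scoped TensorProduct InnerProductSpace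

noncomputable section

/-! The induced inner product on the tensor product of two finite-dimensional complex inner
product spaces: it is characterized by `⟪a ⊗ b, c ⊗ d⟫ = ⟪a, c⟫ * ⟪b, d⟫`, and is here
constructed via the coordinates with respect to the tensor product of orthonormal bases of
the two factors. -/

section TensorInner

variable (E F : Type) [NormedAddCommGroup E] [InnerProductSpace ℂ E] [FiniteDimensional ℂ E]
  [NormedAddCommGroup F] [InnerProductSpace ℂ F] [FiniteDimensional ℂ F]

/-- Coordinates of `E ⊗[ℂ] F` with respect to the tensor product of orthonormal bases of the
two factors. -/
def tensorRepr :
    (E ⊗[ℂ] F) ≃ₗ[ℂ] (Fin (Module.finrank ℂ E) × Fin (Module.finrank ℂ F)) → ℂ :=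
  ((stdOrthonormalBasis ℂ E).toBasis.tensorProduct (stdOrthonormalBasis ℂ F).toBasis).equivFun

/-- The induced inner product on `E ⊗[ℂ] F`. -/
def tensorCore : InnerProductSpace.Core ℂ (E ⊗[ℂ] F) where
  inner x y := ∑ i, (starRingEnd ℂ) (tensorRepr E F x i) * tensorRepr E F y i
  conj_inner_symm x y := by
    simp only [map_sum, map_mul, Complex.conj_conj]
    exact Finset.sum_congr rfl fun i _ => mul_comm _ _
  re_inner_nonneg x := by
    simp only [map_sum]
    apply Finset.sum_nonneg
    intro i _
    rw [← Complex.normSq_eq_conj_mul_self]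
    simpa using Complex.normSq_nonneg _
  add_left x y z := by
    simp only [map_add, Pi.add_apply, add_mul, Finset.sum_add_distrib]
  smul_left x y r := by
    simp only [map_smul, Pi.smul_apply, smul_eq_mul, map_mul, Finset.mul_sum, mul_assoc]
  definite x hx := by
    have hx' : ∑ i, (starRingEnd ℂ) (tensorRepr E F x i) * tensorRepr E F x i = 0 := hx
    have h1 : ((∑ j, Complex.normSq (tensorRepr E F x j) : ℝ) : ℂ) = 0 := by
      rw [← hx']
      push_cast
      exact Finset.sum_congr rfl fun i _ => Complex.normSq_eq_conj_mul_self
    have h2 : ∑ j, Complex.normSq (tensorRepr E F x j) = 0 := by exact_mod_cast h1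
    have h3 := (Finset.sum_eq_zero_iff_of_nonneg
      (fun j _ => Complex.normSq_nonneg (tensorRepr E F x j))).1 h2
    have h4 : tensorRepr E F x = 0 :=
      funext fun j => Complex.normSq_eq_zero.1 (h3 j (Finset.mem_univ j))
    have h5 := congrArg (tensorRepr E F).symm h4
    simpa using h5

instance : NormedAddCommGroup (E ⊗[ℂ] F) :=
  @InnerProductSpace.Core.toNormedAddCommGroup ℂ _ _ _ _ (tensorCore E F)

instance : InnerProductSpace ℂ (E ⊗[ℂ] F) := InnerProductSpace.ofCore (tensorCore E F).toCore

end TensorInner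

/-- Laplacians `Δ_p = d_p* d_p + d_{p-1} d_{p-1}*` (convention `d_{-1} = 0`). -/
def Lap (C : ℕ → Type) [∀ p, NormedAddCommGroup (C p)]
    [∀ p, InnerProductSpace ℂ (C p)] [∀ p, FiniteDimensional ℂ (C p)]
    (d : ∀ p, C p →ₗ[ℂ] C (p + 1)) : ∀ p, C p →ₗ[ℂ] C p
  | 0 => LinearMap.adjoint (d 0) ∘ₗ d 0
  | (p + 1) => LinearMap.adjoint (d (p + 1)) ∘ₗ d (p + 1) + d p ∘ₗ LinearMap.adjoint (d p)

/-- `Tr (exp (-t T))`. -/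
def heatTr {E : Type} [NormedAddCommGroup E] [InnerProductSpace ℂ E]
    [FiniteDimensional ℂ E] (T : E →ₗ[ℂ] E) (t : ℝ) : ℂ :=
  LinearMap.trace ℂ E
    (NormedSpace.exp ((-(t : ℂ)) • LinearMap.toContinuousLinearMap T)).toLinearMap

section

variable (C₁ C₂ : ℕ → Type)
  [∀ i, NormedAddCommGroup (C₁ i)] [∀ i, InnerProductSpace ℂ (C₁ i)]
  [∀ i, FiniteDimensional ℂ (C₁ i)]
  [∀ j, NormedAddCommGroup (C₂ j)] [∀ j, InnerProductSpace ℂ (C₂ j)]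
  [∀ j, FiniteDimensional ℂ (C₂ j)]

/-- The degree-`k` space of the tensor product complex, `⊕_{i+j=k} C₁^i ⊗ C₂^j`
as an orthogonal direct sum. -/
abbrev TensorC (k : ℕ) : Type :=
  PiLp 2 (fun p : ↥(Finset.HasAntidiagonal.antidiagonal k) => C₁ p.1.1 ⊗[ℂ] C₂ p.1.2)

variable (d₁ : ∀ i, C₁ i →ₗ[ℂ] C₁ (i + 1)) (d₂ : ∀ j, C₂ j →ₗ[ℂ] C₂ (j + 1))

/-- The Laplacian of the tensor product complex in degree `k`:
`Δ_k = ⊕_{i+j=k} (Δ'_i ⊗ I + I ⊗ Δ''_j)`. -/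
def tensorLap (k : ℕ) : TensorC C₁ C₂ k →ₗ[ℂ] TensorC C₁ C₂ k :=
  ((WithLp.linearEquiv 2 ℂ
      (∀ p : ↥(Finset.HasAntidiagonal.antidiagonal k), C₁ p.1.1 ⊗[ℂ] C₂ p.1.2)).symm.toLinearMap) ∘ₗ
    (∑ p : ↥(Finset.HasAntidiagonal.antidiagonal k),
      LinearMap.single ℂ (fun q : ↥(Finset.HasAntidiagonal.antidiagonal k) => C₁ q.1.1 ⊗[ℂ] C₂ q.1.2) p ∘ₗ
        (TensorProduct.map (Lap C₁ d₁ p.1.1) LinearMap.id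
          + TensorProduct.map LinearMap.id (Lap C₂ d₂ p.1.2)) ∘ₗ
        LinearMap.proj p) ∘ₗ
    (WithLp.linearEquiv 2 ℂ
      (∀ p : ↥(Finset.HasAntidiagonal.antidiagonal k), C₁ p.1.1 ⊗[ℂ] C₂ p.1.2)).toLinearMap

end

set_option linter.unusedSectionVars false
section TensorHeat
variable {E F G : Type} [NormedAddCommGroup E] [InnerProductSpace ℂ E] [FiniteDimensional ℂ E]
  [NormedAddCommGroup F] [InnerProductSpace ℂ F] [FiniteDimensional ℂ F]
  [NormedAddCommGroup G] [InnerProductSpace ℂ G] [FiniteDimensional ℂ G]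

def mapLeftRH (e : (E ⊗[ℂ] F) ≃ₗ[ℂ] G) : (E →L[ℂ] E) →+* (G →L[ℂ] G) where
  toFun f := LinearMap.toContinuousLinearMap (e.conj (TensorProduct.map f.toLinearMap LinearMap.id))
  map_one' := by
    apply ContinuousLinearMap.coe_injective
    simp only [LinearMap.coe_toContinuousLinearMap]
    rw [show ((1 : E →L[ℂ] E) : E →ₗ[ℂ] E) = LinearMap.id from rfl, TensorProduct.map_id,
      LinearEquiv.conj_id]
    rfl
  map_mul' f g := by
    apply ContinuousLinearMap.coe_injective
    simp only [LinearMap.coe_toContinuousLinearMap, ContinuousLinearMap.mul_def,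
      ContinuousLinearMap.toLinearMap_comp]
    rw [← LinearEquiv.conj_comp, ← TensorProduct.map_comp, LinearMap.id_comp]
  map_zero' := by
    apply ContinuousLinearMap.coe_injective
    simp only [LinearMap.coe_toContinuousLinearMap]
    rw [show ((0 : E →L[ℂ] E) : E →ₗ[ℂ] E) = 0 from rfl, TensorProduct.map_zero_left, map_zero]
    rfl
  map_add' f g := by
    apply ContinuousLinearMap.coe_injective
    simp only [LinearMap.coe_toContinuousLinearMap]
    rw [show ((f + g : E →L[ℂ] E) : E →ₗ[ℂ] E) = f.toLinearMap + g.toLinearMap from rfl,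
      TensorProduct.map_add_left, map_add]
    rfl

def mapRightRH (e : (E ⊗[ℂ] F) ≃ₗ[ℂ] G) : (F →L[ℂ] F) →+* (G →L[ℂ] G) where
  toFun f := LinearMap.toContinuousLinearMap (e.conj (TensorProduct.map LinearMap.id f.toLinearMap))
  map_one' := by
    apply ContinuousLinearMap.coe_injective
    simp only [LinearMap.coe_toContinuousLinearMap]
    rw [show ((1 : F →L[ℂ] F) : F →ₗ[ℂ] F) = LinearMap.id from rfl, TensorProduct.map_id,
      LinearEquiv.conj_id]
    rfl
  map_mul' f g := by
    apply ContinuousLinearMap.coe_injective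
    simp only [LinearMap.coe_toContinuousLinearMap, ContinuousLinearMap.mul_def,
      ContinuousLinearMap.toLinearMap_comp]
    rw [← LinearEquiv.conj_comp, ← TensorProduct.map_comp, LinearMap.id_comp]
  map_zero' := by
    apply ContinuousLinearMap.coe_injective
    simp only [LinearMap.coe_toContinuousLinearMap]
    rw [show ((0 : F →L[ℂ] F) : F →ₗ[ℂ] F) = 0 from rfl, TensorProduct.map_zero_right, map_zero]
    rfl
  map_add' f g := by
    apply ContinuousLinearMap.coe_injective
    simp only [LinearMap.coe_toContinuousLinearMap]
    rw [show ((f + g : F →L[ℂ] F) : F →ₗ[ℂ] F) = f.toLinearMap + g.toLinearMap from rfl,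
      TensorProduct.map_add_right, map_add]
    rfl

def mapLeftLin (e : (E ⊗[ℂ] F) ≃ₗ[ℂ] G) : (E →L[ℂ] E) →ₗ[ℂ] (G →L[ℂ] G) where
  toFun f := LinearMap.toContinuousLinearMap (e.conj (TensorProduct.map f.toLinearMap LinearMap.id))
  map_add' f g := (mapLeftRH e).map_add f g
  map_smul' c f := by
    apply ContinuousLinearMap.coe_injective
    simp only [LinearMap.coe_toContinuousLinearMap, RingHom.id_apply,
      ContinuousLinearMap.coe_smul]
    rw [TensorProduct.map_smul_left, map_smul]

def mapRightLin (e : (E ⊗[ℂ] F) ≃ₗ[ℂ] G) : (F →L[ℂ] F) →ₗ[ℂ] (G →L[ℂ] G) where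
  toFun f := LinearMap.toContinuousLinearMap (e.conj (TensorProduct.map LinearMap.id f.toLinearMap))
  map_add' f g := (mapRightRH e).map_add f g
  map_smul' c f := by
    apply ContinuousLinearMap.coe_injective
    simp only [LinearMap.coe_toContinuousLinearMap, RingHom.id_apply,
      ContinuousLinearMap.coe_smul]
    rw [TensorProduct.map_smul_right, map_smul]

lemma mapLeftRH_continuous (e : (E ⊗[ℂ] F) ≃ₗ[ℂ] G) : Continuous (mapLeftRH e) :=
  (mapLeftLin e).continuous_of_finiteDimensional

lemma mapRightRH_continuous (e : (E ⊗[ℂ] F) ≃ₗ[ℂ] G) : Continuous (mapRightRH e) :=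
  (mapRightLin e).continuous_of_finiteDimensional

lemma heatTr_tensor' (e : (E ⊗[ℂ] F) ≃ₗ[ℂ] G) (A : E →ₗ[ℂ] E) (B : F →ₗ[ℂ] F) (t : ℝ) :
    heatTr (e.conj (TensorProduct.map A LinearMap.id + TensorProduct.map LinearMap.id B)) t
      = heatTr A t * heatTr B t := by
  set A' : E →L[ℂ] E := (-(t : ℂ)) • A.toContinuousLinearMap with hA'
  set B' : F →L[ℂ] F := (-(t : ℂ)) • B.toContinuousLinearMap with hB'
  have h1 : (-(t : ℂ)) • LinearMap.toContinuousLinearMap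
      (e.conj (TensorProduct.map A LinearMap.id + TensorProduct.map LinearMap.id B))
      = mapLeftRH e A' + mapRightRH e B' := by
    apply ContinuousLinearMap.coe_injective
    simp only [ContinuousLinearMap.coe_add, ContinuousLinearMap.coe_smul,
      LinearMap.coe_toContinuousLinearMap, mapLeftRH, mapRightRH, RingHom.coe_mk,
      MonoidHom.coe_mk, OneHom.coe_mk, hA', hB']
    rw [TensorProduct.map_smul_left, TensorProduct.map_smul_right, ← map_add, ← smul_add,
      map_smul]
  have hcomm : Commute (mapLeftRH e A') (mapRightRH e B') := by
    apply ContinuousLinearMap.coe_injective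
    simp only [mapLeftRH, mapRightRH, RingHom.coe_mk, MonoidHom.coe_mk, OneHom.coe_mk,
      ContinuousLinearMap.mul_def, ContinuousLinearMap.toLinearMap_comp,
      LinearMap.coe_toContinuousLinearMap]
    rw [← LinearEquiv.conj_comp, ← LinearEquiv.conj_comp,
      ← TensorProduct.map_comp, ← TensorProduct.map_comp]
    simp
  unfold heatTr
  letI : NormedAlgebra ℚ (E →L[ℂ] E) := .restrictScalars ℚ ℂ _
  letI : NormedAlgebra ℚ (F →L[ℂ] F) := .restrictScalars ℚ ℂ _
  letI : NormedAlgebra ℚ (G →L[ℂ] G) := .restrictScalars ℚ ℂ _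
  rw [h1, NormedSpace.exp_add_of_commute hcomm,
    ← NormedSpace.map_exp (mapLeftRH e) (mapLeftRH_continuous e),
    ← NormedSpace.map_exp (mapRightRH e) (mapRightRH_continuous e)]
  have h2 : ((mapLeftRH e (NormedSpace.exp A')) * (mapRightRH e (NormedSpace.exp B'))).toLinearMap
      = e.conj (TensorProduct.map (NormedSpace.exp A').toLinearMap
          (NormedSpace.exp B').toLinearMap) := by
    simp only [mapLeftRH, mapRightRH, RingHom.coe_mk, MonoidHom.coe_mk, OneHom.coe_mk,
      ContinuousLinearMap.mul_def, ContinuousLinearMap.toLinearMap_comp,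
      LinearMap.coe_toContinuousLinearMap]
    rw [← LinearEquiv.conj_comp, ← TensorProduct.map_comp]
    simp
  rw [h2, LinearMap.trace_conj', LinearMap.trace_tensorProduct']

end TensorHeat

lemma conj_refl_eq {H : Type} [AddCommGroup H] [Module ℂ H] (f : Module.End ℂ H) :
    (LinearEquiv.refl ℂ H).conj f = f := by
  refine LinearMap.ext fun x => rfl

lemma heatTr_tensor (E F : Type) [NormedAddCommGroup E] [InnerProductSpace ℂ E]
    [FiniteDimensional ℂ E] [NormedAddCommGroup F] [InnerProductSpace ℂ F]
    [FiniteDimensional ℂ F] (A : E →ₗ[ℂ] E) (B : F →ₗ[ℂ] F) (t : ℝ) :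
    heatTr (E := E ⊗[ℂ] F)
        (TensorProduct.map A LinearMap.id + TensorProduct.map LinearMap.id B) t
      = heatTr A t * heatTr B t := by
  have h := heatTr_tensor' (LinearEquiv.refl ℂ (E ⊗[ℂ] F)) A B t
  rwa [conj_refl_eq] at h


lemma heatTr_of_finrank_zero {E : Type} [NormedAddCommGroup E] [InnerProductSpace ℂ E]
    [FiniteDimensional ℂ E] (T : E →ₗ[ℂ] E) (t : ℝ) (h : Module.finrank ℂ E = 0) :
    heatTr T t = 0 := by
  have : Subsingleton E := Module.finrank_zero_iff.mp h
  have h0 : (NormedSpace.exp ((-(t : ℂ)) • LinearMap.toContinuousLinearMap T)).toLinearMap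
      = (0 : E →ₗ[ℂ] E) := Subsingleton.elim _ _
  rw [heatTr, h0, map_zero]

section Block
variable {ι : Type} [Fintype ι] [DecidableEq ι] {M : ι → Type}
  [∀ i, NormedAddCommGroup (M i)] [∀ i, InnerProductSpace ℂ (M i)]
  [∀ i, FiniteDimensional ℂ (M i)]

def blockCLM (f : ∀ i, M i →L[ℂ] M i) : PiLp 2 M →L[ℂ] PiLp 2 M :=
  LinearMap.toContinuousLinearMap
    ((WithLp.linearEquiv 2 ℂ (∀ i, M i)).symm.toLinearMap ∘ₗ
      LinearMap.pi (fun i => (f i).toLinearMap ∘ₗ LinearMap.proj i) ∘ₗ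
      (WithLp.linearEquiv 2 ℂ (∀ i, M i)).toLinearMap)

def blockRingHom : (∀ i, M i →L[ℂ] M i) →+* (PiLp 2 M →L[ℂ] PiLp 2 M) where
  toFun := blockCLM
  map_one' := by ext x; rfl
  map_mul' f g := by ext x; rfl
  map_zero' := by ext x; rfl
  map_add' f g := by ext x; rfl

def blockLin : (∀ i, M i →L[ℂ] M i) →ₗ[ℂ] (PiLp 2 M →L[ℂ] PiLp 2 M) where
  toFun := blockCLM
  map_add' f g := by ext x; rfl
  map_smul' c f := by ext x; rfl

lemma blockCLM_continuous : Continuous (blockCLM (M := M)) :=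
  (blockLin (M := M)).continuous_of_finiteDimensional

set_option linter.unusedSectionVars false

lemma block_smul_eq (B : ∀ i, M i →ₗ[ℂ] M i) (t : ℝ) :
    (-(t : ℂ)) • LinearMap.toContinuousLinearMap
      ((WithLp.linearEquiv 2 ℂ (∀ i, M i)).symm.toLinearMap ∘ₗ
        (∑ i, LinearMap.single ℂ M i ∘ₗ B i ∘ₗ LinearMap.proj i) ∘ₗ
        (WithLp.linearEquiv 2 ℂ (∀ i, M i)).toLinearMap)
      = blockCLM (fun i => (-(t : ℂ)) • (B i).toContinuousLinearMap) := by
  refine ContinuousLinearMap.ext fun x => PiLp.ext fun j => ?_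
  show (-(t:ℂ)) • ((∑ i, LinearMap.single ℂ M i ∘ₗ B i ∘ₗ LinearMap.proj i) x j)
      = (-(t:ℂ)) • (B j (x j))
  congr 1
  simp [LinearMap.sum_apply, Finset.sum_apply, Pi.single_apply, Finset.sum_ite_eq]

lemma trace_block (g : ∀ i, M i →ₗ[ℂ] M i) :
    LinearMap.trace ℂ (PiLp 2 M) (blockCLM (fun i => (g i).toContinuousLinearMap)).toLinearMap
      = ∑ i, LinearMap.trace ℂ (M i) (g i) := by
  have h1 : (blockCLM (fun i => (g i).toContinuousLinearMap)).toLinearMap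
      = (WithLp.linearEquiv 2 ℂ (∀ i, M i)).symm.conj
          (LinearMap.pi (fun i => g i ∘ₗ LinearMap.proj i)) := by
    ext x; rfl
  rw [h1, LinearMap.trace_conj']
  have h2 : LinearMap.pi (fun i => g i ∘ₗ LinearMap.proj i)
      = ∑ i, LinearMap.single ℂ M i ∘ₗ (g i ∘ₗ LinearMap.proj i) := by
    refine LinearMap.ext fun x => funext fun j => ?_
    show g j (x j) = (∑ i, LinearMap.single ℂ M i ∘ₗ (g i ∘ₗ LinearMap.proj i)) x j
    simp [LinearMap.sum_apply, Finset.sum_apply, Pi.single_apply, Finset.sum_ite_eq]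
  rw [h2, map_sum]
  refine Finset.sum_congr rfl fun i _ => ?_
  rw [LinearMap.trace_comp_comm', LinearMap.comp_assoc, LinearMap.proj_comp_single_same,
    LinearMap.comp_id]

lemma heatTr_block (B : ∀ i, M i →ₗ[ℂ] M i) (t : ℝ) :
    heatTr (E := PiLp 2 M)
      ((WithLp.linearEquiv 2 ℂ (∀ i, M i)).symm.toLinearMap ∘ₗ
        (∑ i, LinearMap.single ℂ M i ∘ₗ B i ∘ₗ LinearMap.proj i) ∘ₗ
        (WithLp.linearEquiv 2 ℂ (∀ i, M i)).toLinearMap) t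
      = ∑ i, heatTr (B i) t := by
  rw [heatTr, block_smul_eq]
  have h1 : blockCLM (fun i => (-(t : ℂ)) • (B i).toContinuousLinearMap)
      = blockRingHom (fun i => (-(t : ℂ)) • (B i).toContinuousLinearMap) := rfl
  letI : ∀ i, NormedAlgebra ℚ (M i →L[ℂ] M i) := fun i => .restrictScalars ℚ ℂ _
  letI : NormedAlgebra ℚ (PiLp 2 M →L[ℂ] PiLp 2 M) := .restrictScalars ℚ ℂ _
  rw [h1, ← NormedSpace.map_exp (blockRingHom (M := M)) blockCLM_continuous]
  rw [Pi.exp_def]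
  have h2 : (blockRingHom (M := M)) (fun i => NormedSpace.exp ((-(t:ℂ)) • (B i).toContinuousLinearMap))
      = blockCLM (fun i => ((NormedSpace.exp ((-(t:ℂ)) • (B i).toContinuousLinearMap)).toLinearMap).toContinuousLinearMap) := by
    refine ContinuousLinearMap.ext fun x => PiLp.ext fun j => ?_
    rfl
  rw [h2, trace_block]
  rfl

end Block

lemma comb_aux (n₁ n₂ : ℕ) (a b : ℕ → ℂ) (ha : ∀ i, n₁ < i → a i = 0)
    (hb : ∀ j, n₂ < j → b j = 0) :
    ∑ k ∈ Finset.range (n₁ + n₂ + 1), (-1 : ℂ) ^ k * (k : ℂ) *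
        ∑ p ∈ Finset.HasAntidiagonal.antidiagonal k, a p.1 * b p.2 =
      (∑ i ∈ Finset.range (n₁ + 1), (-1 : ℂ) ^ i * a i) *
          (∑ j ∈ Finset.range (n₂ + 1), (-1 : ℂ) ^ j * (j : ℂ) * b j) +
        (∑ j ∈ Finset.range (n₂ + 1), (-1 : ℂ) ^ j * b j) *
          (∑ i ∈ Finset.range (n₁ + 1), (-1 : ℂ) ^ i * (i : ℂ) * a i) := by
  set N := n₁ + n₂ + 1 with hN
  set F : ℕ × ℕ → ℂ := fun p =>
    (-1 : ℂ) ^ (p.1 + p.2) * ((p.1 : ℂ) + (p.2 : ℂ)) * (a p.1 * b p.2) with hF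
  have hLHS : ∑ k ∈ Finset.range N, (-1 : ℂ) ^ k * (k : ℂ) *
      ∑ p ∈ Finset.HasAntidiagonal.antidiagonal k, a p.1 * b p.2
      = ∑ p ∈ (Finset.range N).biUnion Finset.HasAntidiagonal.antidiagonal, F p := by
    rw [Finset.sum_biUnion]
    · refine Finset.sum_congr rfl fun k _ => ?_
      rw [Finset.mul_sum]
      refine Finset.sum_congr rfl fun p hp => ?_
      rw [Finset.HasAntidiagonal.mem_antidiagonal] at hp
      simp only [hF, hp]
      push_cast [← hp]
      ring
    · intro x _ y _ hxy
      simp only [Function.onFun, Finset.disjoint_left]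
      intro p hpx hpy
      rw [Finset.HasAntidiagonal.mem_antidiagonal] at hpx hpy
      exact hxy (hpx ▸ hpy ▸ rfl)
  have hsub : Finset.range (n₁ + 1) ×ˢ Finset.range (n₂ + 1)
      ⊆ (Finset.range N).biUnion Finset.HasAntidiagonal.antidiagonal := by
    intro p hp
    simp only [Finset.mem_product, Finset.mem_range] at hp
    refine Finset.mem_biUnion.2 ⟨p.1 + p.2, Finset.mem_range.2 (by omega), ?_⟩
    exact Finset.HasAntidiagonal.mem_antidiagonal.2 rfl
  have hzero : ∀ p ∈ (Finset.range N).biUnion Finset.HasAntidiagonal.antidiagonal,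
      p ∉ Finset.range (n₁ + 1) ×ˢ Finset.range (n₂ + 1) → F p = 0 := by
    intro p _ hp
    simp only [Finset.mem_product, Finset.mem_range, not_and_or, not_lt] at hp
    rcases hp with h | h
    · simp [hF, ha p.1 (by omega)]
    · simp [hF, hb p.2 (by omega)]
  rw [hLHS, ← Finset.sum_subset hsub hzero]
  rw [Finset.sum_mul_sum, Finset.sum_mul_sum]
  rw [Finset.sum_comm (s := Finset.range (n₂ + 1)) (t := Finset.range (n₁ + 1))]
  rw [← Finset.sum_add_distrib, Finset.sum_product]
  refine Finset.sum_congr rfl fun i hi => ?_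
  rw [← Finset.sum_add_distrib]
  refine Finset.sum_congr rfl fun j hj => ?_
  simp only [hF]
  push_cast
  ring

/-- for the tensor product of two finite-dimensional Hilbert cochain complexes
(the tensor factors carrying the induced inner products), for all `t > 0`:
`Σ_k (-1)^k k Tr e^{-tΔ_k} = (Σ_i (-1)^i Tr e^{-tΔ'_i})(Σ_j (-1)^j j Tr e^{-tΔ''_j})
 + (Σ_j (-1)^j Tr e^{-tΔ''_j})(Σ_i (-1)^i i Tr e^{-tΔ'_i})`. -/
theorem tensor_weighted_heat_trace
    (n₁ n₂ : ℕ) (C₁ C₂ : ℕ → Type)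
    [∀ i, NormedAddCommGroup (C₁ i)] [∀ i, InnerProductSpace ℂ (C₁ i)]
    [∀ i, FiniteDimensional ℂ (C₁ i)]
    [∀ j, NormedAddCommGroup (C₂ j)] [∀ j, InnerProductSpace ℂ (C₂ j)]
    [∀ j, FiniteDimensional ℂ (C₂ j)]
    (d₁ : ∀ i, C₁ i →ₗ[ℂ] C₁ (i + 1)) (d₂ : ∀ j, C₂ j →ₗ[ℂ] C₂ (j + 1))
    (hd₁ : ∀ i, d₁ (i + 1) ∘ₗ d₁ i = 0) (hd₂ : ∀ j, d₂ (j + 1) ∘ₗ d₂ j = 0)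
    (htriv₁ : ∀ i, n₁ < i → Module.finrank ℂ (C₁ i) = 0)
    (htriv₂ : ∀ j, n₂ < j → Module.finrank ℂ (C₂ j) = 0)
    (t : ℝ) (ht : 0 < t) :
    ∑ k ∈ Finset.range (n₁ + n₂ + 1),
        (-1 : ℂ) ^ k * (k : ℂ) * heatTr (E := TensorC C₁ C₂ k) (tensorLap C₁ C₂ d₁ d₂ k) t =
      (∑ i ∈ Finset.range (n₁ + 1), (-1 : ℂ) ^ i * heatTr (Lap C₁ d₁ i) t) *
          (∑ j ∈ Finset.range (n₂ + 1), (-1 : ℂ) ^ j * (j : ℂ) * heatTr (Lap C₂ d₂ j) t) +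
        (∑ j ∈ Finset.range (n₂ + 1), (-1 : ℂ) ^ j * heatTr (Lap C₂ d₂ j) t) *
          (∑ i ∈ Finset.range (n₁ + 1), (-1 : ℂ) ^ i * (i : ℂ) * heatTr (Lap C₁ d₁ i) t) := by
  have key : ∀ k, heatTr (E := TensorC C₁ C₂ k) (tensorLap C₁ C₂ d₁ d₂ k) t
      = ∑ p ∈ Finset.HasAntidiagonal.antidiagonal k,
          heatTr (Lap C₁ d₁ p.1) t * heatTr (Lap C₂ d₂ p.2) t := by
    intro k
    unfold tensorLap
    rw [heatTr_block]
    rw [← Finset.sum_coe_sort (Finset.HasAntidiagonal.antidiagonal k)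
      (fun q => heatTr (Lap C₁ d₁ q.1) t * heatTr (Lap C₂ d₂ q.2) t)]
    exact Finset.sum_congr rfl fun p _ => heatTr_tensor _ _ _ _ t
  have hL : ∑ k ∈ Finset.range (n₁ + n₂ + 1),
      (-1 : ℂ) ^ k * (k : ℂ) * heatTr (E := TensorC C₁ C₂ k) (tensorLap C₁ C₂ d₁ d₂ k) t
      = ∑ k ∈ Finset.range (n₁ + n₂ + 1), (-1 : ℂ) ^ k * (k : ℂ) *
          ∑ p ∈ Finset.HasAntidiagonal.antidiagonal k,
            heatTr (Lap C₁ d₁ p.1) t * heatTr (Lap C₂ d₂ p.2) t :=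
    Finset.sum_congr rfl fun k _ => by rw [key k]
  rw [hL]
  exact comb_aux n₁ n₂ (fun i => heatTr (Lap C₁ d₁ i) t) (fun j => heatTr (Lap C₂ d₂ j) t)
    (fun i hi => heatTr_of_finrank_zero _ t (htriv₁ i hi))
    (fun j hj => heatTr_of_finrank_zero _ t (htriv₂ j hj))

end
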